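/- Let d = 3 and define the local rule f : Fin 3 → Fin 3 → Fin 3 → Fin 3 by f x y z = y if x ∈ {0,1}, and, if x = 2, f 2 y z = σ y where σ 0 = 1, σ 1 = 0, σ 2 = 2 (the 3-state CA rule 222000111222111000222111000). Then for every n ≥ 3, the global map F of the n-cell periodic-boundary CA is bijective. -/
import Mathlib

def f16 : Fin 3 → Fin 3 → Fin 3 → Fin 3 :=
  fun x y _ => if x = 0 ∨ x = 1 then y else ![1, 0, 2] y

theorem stmt_16 (n : ℕ) (hn : 3 ≤ n) :
    Function.Bijective
      (fun (c : ZMod n → Fin 3) (i : ZMod n) => f16 (c (i - 1)) (c i) (c (i + 1))) := by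
  have key : ∀ a b c x y z : Fin 3, f16 (f16 a b x) (f16 b c y) z = c := by decide
  have h : Function.Involutive
      (fun (c : ZMod n → Fin 3) (i : ZMod n) => f16 (c (i - 1)) (c i) (c (i + 1))) := by
    intro c
    funext i
    exact key _ _ _ _ _ _
  exact h.bijective
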